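/- Under the assumptions of the previous self-concordance lemma (|g'''(t)| ≤ S·g''(t)/(1−St) on [0,1/S), g convex, g''(0) > 0), one has for all 0 ≤ t ≤ 1/S the two-sided bound (t²/2 − S t³/6)·g''(0) ≤ g(t) − g(0) − g'(0)·t ≤ ((St + (1−St)·log(1−St))/S²)·g''(0). -/

import Mathlib

/-- Lemma (mine-1d), full two-sided Taylor bracketing on [0, 1/S].
At t = 1/S the term (1−St)·log(1−St) equals 0 (Real.log 0 = 0 in Lean). -/
theorem stmt_5 (g : ℝ → ℝ) (S : ℝ) (hS : 0 < S)
    (hg : ContDiffOn ℝ 3 g (Set.Icc 0 (1 / S)))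
    (hconv : ConvexOn ℝ (Set.Icc 0 (1 / S)) g)
    (h0 : 0 < iteratedDerivWithin 2 g (Set.Icc 0 (1 / S)) 0)
    (hsc : ∀ t : ℝ, 0 ≤ t → t < 1 / S →
      |iteratedDerivWithin 3 g (Set.Icc 0 (1 / S)) t| ≤
        S * iteratedDerivWithin 2 g (Set.Icc 0 (1 / S)) t / (1 - S * t)) :
    ∀ t ∈ Set.Icc (0:ℝ) (1 / S),
      (t ^ 2 / 2 - S * t ^ 3 / 6) * iteratedDerivWithin 2 g (Set.Icc 0 (1 / S)) 0
        ≤ g t - g 0 - iteratedDerivWithin 1 g (Set.Icc 0 (1 / S)) 0 * t ∧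
      g t - g 0 - iteratedDerivWithin 1 g (Set.Icc 0 (1 / S)) 0 * t
        ≤ ((S * t + (1 - S * t) * Real.log (1 - S * t)) / S ^ 2) *
          iteratedDerivWithin 2 g (Set.Icc 0 (1 / S)) 0 := by
  have hb : (0:ℝ) < 1 / S := by positivity
  set s : Set ℝ := Set.Icc 0 (1 / S) with hs_def
  have husd : UniqueDiffOn ℝ s := uniqueDiffOn_Icc hb
  set g1 : ℝ → ℝ := derivWithin g s with hg1d
  set g2 : ℝ → ℝ := derivWithin g1 s with hg2d
  set g3 : ℝ → ℝ := derivWithin g2 s with hg3d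
  -- identify iterated derivatives
  have e1 : ∀ x ∈ s, iteratedDerivWithin 1 g s x = g1 x := by
    intro x hx
    rw [iteratedDerivWithin_one]
  have e2 : ∀ x ∈ s, iteratedDerivWithin 2 g s x = g2 x := by
    intro x hx
    rw [show (2:ℕ) = 1 + 1 from rfl, iteratedDerivWithin_succ',
      iteratedDerivWithin_one]
  have e3 : ∀ x ∈ s, iteratedDerivWithin 3 g s x = g3 x := by
    intro x hx
    rw [show (3:ℕ) = 2 + 1 from rfl, iteratedDerivWithin_succ',
      show (2:ℕ) = 1 + 1 from rfl, iteratedDerivWithin_succ',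
      iteratedDerivWithin_one]
  have h0s : (0:ℝ) ∈ s := Set.left_mem_Icc.2 hb.le
  -- smoothness of the derivatives
  have hg1cd : ContDiffOn ℝ 2 g1 s := hg.derivWithin husd (by norm_num)
  have hg2cd : ContDiffOn ℝ 1 g2 s := hg1cd.derivWithin husd (by norm_num)
  have hgdiff : DifferentiableOn ℝ g s := hg.differentiableOn (by norm_num)
  have hg1diff : DifferentiableOn ℝ g1 s := hg1cd.differentiableOn (by norm_num)
  have hg2diff : DifferentiableOn ℝ g2 s := hg2cd.differentiableOn one_ne_zero
  have hmem : ∀ x ∈ Set.Ioo (0:ℝ) (1 / S), s ∈ nhds x := fun x hx =>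
    Icc_mem_nhds hx.1 hx.2
  have hD1 : ∀ x ∈ Set.Ioo (0:ℝ) (1 / S), HasDerivAt g (g1 x) x := by
    intro x hx
    have hxs : x ∈ s := Set.Ioo_subset_Icc_self hx
    have h := (hgdiff x hxs).differentiableAt (hmem x hx)
    rw [hg1d, derivWithin_of_mem_nhds (hmem x hx)]
    exact h.hasDerivAt
  have hD2 : ∀ x ∈ Set.Ioo (0:ℝ) (1 / S), HasDerivAt g1 (g2 x) x := by
    intro x hx
    have hxs : x ∈ s := Set.Ioo_subset_Icc_self hx
    have h := (hg1diff x hxs).differentiableAt (hmem x hx)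
    rw [hg2d, derivWithin_of_mem_nhds (hmem x hx)]
    exact h.hasDerivAt
  have hD3 : ∀ x ∈ Set.Ioo (0:ℝ) (1 / S), HasDerivAt g2 (g3 x) x := by
    intro x hx
    have hxs : x ∈ s := Set.Ioo_subset_Icc_self hx
    have h := (hg2diff x hxs).differentiableAt (hmem x hx)
    rw [hg3d, derivWithin_of_mem_nhds (hmem x hx)]
    exact h.hasDerivAt
  -- the self-concordance bound in terms of g2, g3
  have hsc' : ∀ x ∈ Set.Ioo (0:ℝ) (1 / S), |g3 x| ≤ S * g2 x / (1 - S * x) := by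
    intro x hx
    have h := hsc x hx.1.le hx.2
    rwa [e3 x (Set.Ioo_subset_Icc_self hx), e2 x (Set.Ioo_subset_Icc_self hx)] at h
  have hpos : ∀ x ∈ Set.Ioo (0:ℝ) (1 / S), 0 < 1 - S * x := by
    intro x hx
    have := (lt_div_iff₀ hS).1 hx.2
    nlinarith
  -- upper bound on g2 : g2 t * (1 - S t) ≤ g2 0 for t ∈ [0, 1/S)
  have hd' : ∀ x : ℝ, HasDerivAt (fun y : ℝ => 1 - S * y) (-S) x := by
    intro x
    simpa using (HasDerivAt.const_sub 1 ((hasDerivAt_id x).const_mul S))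
  have hub : ∀ t ∈ Set.Ico (0:ℝ) (1 / S), g2 t * (1 - S * t) ≤ g2 0 := by
    intro t ht
    rcases eq_or_lt_of_le ht.1 with h | h
    · rw [← h]; simp
    have hsub : Set.Icc (0:ℝ) t ⊆ s := Set.Icc_subset_Icc le_rfl ht.2.le
    have hsub' : Set.Ioo (0:ℝ) t ⊆ Set.Ioo 0 (1 / S) := Set.Ioo_subset_Ioo le_rfl ht.2.le
    have hder : ∀ x ∈ Set.Ioo (0:ℝ) t,
        HasDerivAt (fun y => g2 y * (1 - S * y)) (g3 x * (1 - S * x) + g2 x * -S) x :=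
      fun x hx => (hD3 x (hsub' hx)).mul (hd' x)
    have hB : AntitoneOn (fun y => g2 y * (1 - S * y)) (Set.Icc 0 t) := by
      apply antitoneOn_of_deriv_nonpos (convex_Icc 0 t)
      · exact (hg2cd.continuousOn.mono hsub).mul
          ((continuous_const.sub (continuous_const.mul continuous_id)).continuousOn)
      · rw [interior_Icc]
        exact fun x hx => ((hder x hx).differentiableAt).differentiableWithinAt
      · rw [interior_Icc]
        intro x hx
        rw [(hder x hx).deriv]
        have hp := hpos x (hsub' hx)
        have h3 : g3 x ≤ S * g2 x / (1 - S * x) := le_trans (le_abs_self _) (hsc' x (hsub' hx))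
        have h4 : g3 x * (1 - S * x) ≤ S * g2 x := by
          have := (le_div_iff₀ hp).1 h3
          linarith
        nlinarith
    have := hB (Set.left_mem_Icc.2 h.le) (Set.right_mem_Icc.2 h.le) h.le
    simpa using this
  -- lower bound on g2 : g2 0 * (1 - S t) ≤ g2 t for t ∈ [0, 1/S)
  have hlb : ∀ t ∈ Set.Ico (0:ℝ) (1 / S), g2 0 * (1 - S * t) ≤ g2 t := by
    intro t ht
    rcases eq_or_lt_of_le ht.1 with h | h
    · rw [← h]; simp
    have hpt : 0 < 1 - S * t := hpos t ⟨h, ht.2⟩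
    have hsub : Set.Icc (0:ℝ) t ⊆ s := Set.Icc_subset_Icc le_rfl ht.2.le
    have hsub' : Set.Ioo (0:ℝ) t ⊆ Set.Ioo 0 (1 / S) := Set.Ioo_subset_Ioo le_rfl ht.2.le
    have hposIcc : ∀ x ∈ Set.Icc (0:ℝ) t, 0 < 1 - S * x := by
      intro x hx
      have : S * x ≤ S * t := by nlinarith [hx.2]
      linarith
    have hder : ∀ x ∈ Set.Ioo (0:ℝ) t,
        HasDerivAt (fun y => g2 y / (1 - S * y))
          ((g3 x * (1 - S * x) - g2 x * -S) / (1 - S * x) ^ 2) x :=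
      fun x hx => (hD3 x (hsub' hx)).div (hd' x) (ne_of_gt (hpos x (hsub' hx)))
    have hA : MonotoneOn (fun y => g2 y / (1 - S * y)) (Set.Icc 0 t) := by
      apply monotoneOn_of_deriv_nonneg (convex_Icc 0 t)
      · exact (hg2cd.continuousOn.mono hsub).div
          ((continuous_const.sub (continuous_const.mul continuous_id)).continuousOn)
          (fun x hx => ne_of_gt (hposIcc x hx))
      · rw [interior_Icc]
        exact fun x hx => ((hder x hx).differentiableAt).differentiableWithinAt
      · rw [interior_Icc]
        intro x hx
        rw [(hder x hx).deriv]
        have hp := hpos x (hsub' hx)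
        have h3 : -(S * g2 x / (1 - S * x)) ≤ g3 x :=
          le_trans (neg_le_neg (hsc' x (hsub' hx))) (neg_abs_le _)
        have h4 : -(S * g2 x) ≤ g3 x * (1 - S * x) := by
          have h5 : -(S * g2 x) / (1 - S * x) ≤ g3 x := by
            rw [neg_div]; exact le_trans (by linarith) h3
          have := (div_le_iff₀ hp).1 h5
          linarith
        apply div_nonneg _ (sq_nonneg _)
        nlinarith
    have h6 := hA (Set.left_mem_Icc.2 h.le) (Set.right_mem_Icc.2 h.le) h.le
    simp only [mul_zero, sub_zero, div_one] at h6
    exact (le_div_iff₀ hpt).1 h6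
  -- lower Taylor bound
  have hlower : ∀ t ∈ s, (t ^ 2 / 2 - S * t ^ 3 / 6) * g2 0 ≤ g t - g 0 - g1 0 * t := by
    have hM : MonotoneOn (fun x => g1 x - g1 0 - (x - S * x ^ 2 / 2) * g2 0) s := by
      apply monotoneOn_of_deriv_nonneg (convex_Icc 0 (1 / S))
      · exact (hg1cd.continuousOn.sub continuousOn_const).sub (Continuous.continuousOn (by fun_prop))
      · rw [interior_Icc]
        intro x hx
        have hpoly : HasDerivAt (fun y : ℝ => (y - S * y ^ 2 / 2) * g2 0) ((1 - S * x) * g2 0) x := by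
          have h1 := (((hasDerivAt_id x).sub (((hasDerivAt_pow 2 x).const_mul S).div_const 2))).mul_const (g2 0)
          refine h1.congr_deriv ?_
          ring
        exact ((((hD2 x hx).sub_const (g1 0)).sub hpoly).differentiableAt).differentiableWithinAt
      · rw [interior_Icc]
        intro x hx
        have hpoly : HasDerivAt (fun y : ℝ => (y - S * y ^ 2 / 2) * g2 0) ((1 - S * x) * g2 0) x := by
          have h1 := (((hasDerivAt_id x).sub (((hasDerivAt_pow 2 x).const_mul S).div_const 2))).mul_const (g2 0)
          refine h1.congr_deriv ?_
          ring
        rw [show deriv (fun x => g1 x - g1 0 - (x - S * x ^ 2 / 2) * g2 0) x = _ from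
          (((hD2 x hx).sub_const (g1 0)).sub hpoly).deriv]
        have := hlb x ⟨hx.1.le, hx.2⟩
        nlinarith
    have hMnn : ∀ x ∈ s, 0 ≤ g1 x - g1 0 - (x - S * x ^ 2 / 2) * g2 0 := by
      intro x hx
      have := hM h0s hx (by exact_mod_cast hx.1)
      simp only at this ⊢
      nlinarith
    have hL : MonotoneOn (fun x => g x - g 0 - g1 0 * x - (x ^ 2 / 2 - S * x ^ 3 / 6) * g2 0) s := by
      apply monotoneOn_of_deriv_nonneg (convex_Icc 0 (1 / S))
      · exact ((hg.continuousOn.sub continuousOn_const).sub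
          (Continuous.continuousOn (by fun_prop))).sub (Continuous.continuousOn (by fun_prop))
      · rw [interior_Icc]
        intro x hx
        have hpoly : HasDerivAt (fun y : ℝ => (y ^ 2 / 2 - S * y ^ 3 / 6) * g2 0)
            ((x - S * x ^ 2 / 2) * g2 0) x := by
          have h1 := (((hasDerivAt_pow 2 x).div_const 2).sub
            (((hasDerivAt_pow 3 x).const_mul S).div_const 6)).mul_const (g2 0)
          refine h1.congr_deriv ?_
          ring
        have hlin : HasDerivAt (fun y : ℝ => g1 0 * y) (g1 0) x := by
          simpa using (hasDerivAt_id x).const_mul (g1 0)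
        exact (((((hD1 x hx).sub_const (g 0)).sub hlin).sub hpoly).differentiableAt).differentiableWithinAt
      · rw [interior_Icc]
        intro x hx
        have hpoly : HasDerivAt (fun y : ℝ => (y ^ 2 / 2 - S * y ^ 3 / 6) * g2 0)
            ((x - S * x ^ 2 / 2) * g2 0) x := by
          have h1 := (((hasDerivAt_pow 2 x).div_const 2).sub
            (((hasDerivAt_pow 3 x).const_mul S).div_const 6)).mul_const (g2 0)
          refine h1.congr_deriv ?_
          ring
        have hlin : HasDerivAt (fun y : ℝ => g1 0 * y) (g1 0) x := by
          simpa using (hasDerivAt_id x).const_mul (g1 0)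
        rw [show deriv (fun x => g x - g 0 - g1 0 * x - (x ^ 2 / 2 - S * x ^ 3 / 6) * g2 0) x = _ from
          ((((hD1 x hx).sub_const (g 0)).sub hlin).sub hpoly).deriv]
        have := hMnn x (Set.Ioo_subset_Icc_self hx)
        linarith
    intro t ht
    have := hL h0s ht ht.1
    simp only at this
    nlinarith
  -- upper Taylor bound
  have hupper : ∀ t ∈ s,
      g t - g 0 - g1 0 * t ≤ ((S * t + (1 - S * t) * Real.log (1 - S * t)) / S ^ 2) * g2 0 := by
    -- first: g1 x - g1 0 ≤ -(log(1-Sx)/S) * g2 0 on [0, 1/S)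
    have hP : ∀ x ∈ Set.Ico (0:ℝ) (1 / S),
        0 ≤ -(Real.log (1 - S * x) / S) * g2 0 - (g1 x - g1 0) := by
      intro x hx
      rcases eq_or_lt_of_le hx.1 with h | h
      · rw [← h]; simp
      have hsub : Set.Icc (0:ℝ) x ⊆ s := Set.Icc_subset_Icc le_rfl hx.2.le
      have hsub' : Set.Ioo (0:ℝ) x ⊆ Set.Ioo 0 (1 / S) := Set.Ioo_subset_Ioo le_rfl hx.2.le
      have hposIcc : ∀ y ∈ Set.Icc (0:ℝ) x, 0 < 1 - S * y := by
        intro y hy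
        have hpx := hpos x ⟨h, hx.2⟩
        have : S * y ≤ S * x := by nlinarith [hy.2]
        linarith
      have hder : ∀ y ∈ Set.Ioo (0:ℝ) x,
          HasDerivAt (fun z => -(Real.log (1 - S * z) / S) * g2 0 - (g1 z - g1 0))
            (-(((1 - S * y)⁻¹ * -S) / S) * g2 0 - g2 y) y := by
        intro y hy
        have hp := hpos y (hsub' hy)
        have hlog : HasDerivAt (fun z => Real.log (1 - S * z)) ((1 - S * y)⁻¹ * -S) y := by
          have := (Real.hasDerivAt_log (ne_of_gt hp)).comp y (hd' y)
          simpa [Function.comp_def] using this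
        exact ((hlog.div_const S).neg.mul_const (g2 0)).sub ((hD2 y (hsub' hy)).sub_const (g1 0))
      have hPmono : MonotoneOn (fun z => -(Real.log (1 - S * z) / S) * g2 0 - (g1 z - g1 0))
          (Set.Icc 0 x) := by
        apply monotoneOn_of_deriv_nonneg (convex_Icc 0 x)
        · apply ContinuousOn.sub
          · apply ContinuousOn.mul _ continuousOn_const
            apply ContinuousOn.neg
            apply ContinuousOn.div_const
            exact ContinuousOn.log
              ((continuous_const.sub (continuous_const.mul continuous_id)).continuousOn)
              (fun y hy => ne_of_gt (hposIcc y hy))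
          · exact (hg1cd.continuousOn.mono hsub).sub continuousOn_const
        · rw [interior_Icc]
          exact fun y hy => ((hder y hy).differentiableAt).differentiableWithinAt
        · rw [interior_Icc]
          intro y hy
          rw [(hder y hy).deriv]
          have hp := hpos y (hsub' hy)
          have h2 : g2 y ≤ g2 0 / (1 - S * y) :=
            (le_div_iff₀ hp).2 (by linarith [hub y ⟨hy.1.le, (hsub' hy).2⟩])
          have heq : -(((1 - S * y)⁻¹ * -S) / S) * g2 0 = g2 0 / (1 - S * y) := by
            field_simp
          rw [heq]
          linarith
      have := hPmono (Set.left_mem_Icc.2 h.le) (Set.right_mem_Icc.2 h.le) h.le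
      simp only [mul_zero, sub_zero, Real.log_one, zero_div, neg_zero, zero_mul, sub_self,
        zero_sub] at this
      linarith
    have hU : MonotoneOn (fun x =>
        ((S * x + (1 - S * x) * Real.log (1 - S * x)) / S ^ 2) * g2 0
          - (g x - g 0 - g1 0 * x)) s := by
      apply monotoneOn_of_deriv_nonneg (convex_Icc 0 (1 / S))
      · apply ContinuousOn.sub
        · apply Continuous.continuousOn
          apply Continuous.mul _ continuous_const
          apply Continuous.div_const
          exact (continuous_const.mul continuous_id).add
            (Real.continuous_mul_log.comp (continuous_const.sub (continuous_const.mul continuous_id)))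
        · exact (hg.continuousOn.sub continuousOn_const).sub (Continuous.continuousOn (by fun_prop))
      · rw [interior_Icc]
        intro x hx
        have hp := hpos x hx
        have hml : HasDerivAt (fun y => (1 - S * y) * Real.log (1 - S * y))
            ((Real.log (1 - S * x) + 1) * -S) x := by
          have := (Real.hasDerivAt_mul_log (ne_of_gt hp)).comp x (hd' x)
          simpa [Function.comp_def] using this
        have hlin : HasDerivAt (fun y : ℝ => g1 0 * y) (g1 0) x := by
          simpa using (hasDerivAt_id x).const_mul (g1 0)
        have hSx : HasDerivAt (fun y : ℝ => S * y) S x := by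
          simpa using (hasDerivAt_id x).const_mul S
        exact ((((((hSx.add hml).div_const (S ^ 2)).mul_const (g2 0)).sub
          (((hD1 x hx).sub_const (g 0)).sub hlin)).differentiableAt).differentiableWithinAt)
      · rw [interior_Icc]
        intro x hx
        have hp := hpos x hx
        have hml : HasDerivAt (fun y => (1 - S * y) * Real.log (1 - S * y))
            ((Real.log (1 - S * x) + 1) * -S) x := by
          have := (Real.hasDerivAt_mul_log (ne_of_gt hp)).comp x (hd' x)
          simpa [Function.comp_def] using this
        have hlin : HasDerivAt (fun y : ℝ => g1 0 * y) (g1 0) x := by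
          simpa using (hasDerivAt_id x).const_mul (g1 0)
        have hSx : HasDerivAt (fun y : ℝ => S * y) S x := by
          simpa using (hasDerivAt_id x).const_mul S
        rw [show deriv (fun x => ((S * x + (1 - S * x) * Real.log (1 - S * x)) / S ^ 2) * g2 0
            - (g x - g 0 - g1 0 * x)) x = _ from
          (((((hSx.add hml).div_const (S ^ 2)).mul_const (g2 0)).sub
          (((hD1 x hx).sub_const (g 0)).sub hlin)).deriv)]
        have heq : (S + (Real.log (1 - S * x) + 1) * -S) / S ^ 2
            = -(Real.log (1 - S * x) / S) := by
          field_simp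
          ring
        rw [heq]
        have := hP x ⟨hx.1.le, hx.2⟩
        linarith
    intro t ht
    have := hU h0s ht ht.1
    simp only [mul_zero, sub_zero, Real.log_one, zero_add, mul_one, add_zero, zero_div,
      zero_mul, sub_self, mul_zero] at this
    nlinarith
  intro t ht
  rw [e2 0 h0s, e1 0 h0s]
  exact ⟨hlower t ht, hupper t ht⟩
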